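/- arXiv:1911.00574 — 2 statements merged into one kernel-verified Lean document; each statement's English description precedes it below -/
import Mathlib

section
/- Let Ω ⊂ ℝ² be open and bounded, and let ψ : ℝ² → ℝ be convex satisfying the transport inequality on Ω for nonnegative Radon measures μ, ν satisfying Assumption(h₁,h₂,λ₁,λ₂). Let x, y ∈ Ω with x ≠ y, set ℓ := |x−y|/2, let δ > 0, and suppose the δ-neighborhood U_δ := ⋃_{z ∈ [x,y]} B_δ(z) of the segment [x,y] is contained in Ω. If h₁ ≤ min{δ, ℓ} and h₂² < δℓ/(λ₁λ₂), then diam ∂ψ(U_δ) ≥ √( δℓ/(λ₁λ₂) ). -/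
open MeasureTheory Set Metric Filter
open scoped RealInnerProductSpace ENNReal

noncomputable section

abbrev E2 := EuclideanSpace ℝ (Fin 2)

/-- The subdifferential of `ψ` at `x`:
`∂ψ(x) = {z : ψ(y) ≥ ψ(x) + z·(y−x) for all y}`. -/
def subdiff (ψ : E2 → ℝ) (x : E2) : Set E2 :=
  {z | ∀ y : E2, ψ x + ⟪z, y - x⟫ ≤ ψ y}

/-- `∂ψ(A) = ⋃_{x ∈ A} ∂ψ(x)`. -/
def subdiffSet (ψ : E2 → ℝ) (A : Set E2) : Set E2 :=
  ⋃ x ∈ A, subdiff ψ x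

/-- A rectangle of dimensions `a × b` in the plane: a rigid image of `[0,a] × [0,b]`. -/
def IsRectangle (R : Set E2) (a b : ℝ) : Prop :=
  ∃ f : E2 ≃ᵢ E2, R = f '' {p : E2 | p 0 ∈ Icc 0 a ∧ p 1 ∈ Icc 0 b}

/-- `ψ` satisfies the transport inequality `μ(A) ≤ ν(∂ψ(A))` for all Borel `A ⊆ Ω`. -/
def TransportIneq (Ω : Set E2) (ψ : E2 → ℝ) (μ ν : Measure E2) : Prop :=
  ∀ A : Set E2, A ⊆ Ω → MeasurableSet A → μ A ≤ ν (subdiffSet ψ A)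

/-- Assumption (h₁, h₂, λ₁, λ₂): `μ(R) ≥ |R|/λ₁` for every rectangle `R ⊆ Ω` with both
dimensions at least `h₁`, and `ν(R' ∩ ∂ψ(Ω)) ≤ λ₂ |R'|` for every rectangle `R'` with
both dimensions at least `h₂`. -/
def MeasAssump (Ω : Set E2) (ψ : E2 → ℝ) (μ ν : Measure E2)
    (h₁ h₂ l₁ l₂ : ℝ) : Prop :=
  (∀ (R : Set E2) (a b : ℝ), IsRectangle R a b → h₁ ≤ a → h₁ ≤ b → R ⊆ Ω →
      volume R ≤ ENNReal.ofReal l₁ * μ R) ∧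
  (∀ (R' : Set E2) (a b : ℝ), IsRectangle R' a b → h₂ ≤ a → h₂ ≤ b →
      ν (R' ∩ subdiffSet ψ Ω) ≤ ENNReal.ofReal l₂ * volume R')

/-- The δ-neighborhood `U_δ = ⋃_{z ∈ [x,y]} B_δ(z)` of the segment `[x,y]`. -/
def Useg (x y : E2) (δ : ℝ) : Set E2 := ⋃ z ∈ segment ℝ x y, closedBall z δ

/-- `ε = −min_{t ∈ [0,1]} ( ψ((1−t)x + ty) − (1−t)ψ(x) − tψ(y) )`. -/
def epsStar (ψ : E2 → ℝ) (x y : E2) : ℝ :=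
  - sInf ((fun t : ℝ => ψ ((1 - t) • x + t • y) - ((1 - t) * ψ x + t * ψ y)) '' Icc 0 1)

/-- `Ω^δ = {x ∈ Ω : dist(x, ∂Ω) > δ}`. -/
def innerSet (Ω : Set E2) (δ : ℝ) : Set E2 :=
  {p ∈ Ω | δ < infDist p (frontier Ω)}


/-! ### Auxiliary lemmas -/

def ptE (a b : ℝ) : E2 := WithLp.toLp 2 ![a, b]

@[simp] lemma ptE_zero (a b : ℝ) : ptE a b 0 = a := rfl
@[simp] lemma ptE_one (a b : ℝ) : ptE a b 1 = b := rfl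

lemma ptE_eta (q : E2) : ptE (q 0) (q 1) = q := by
  ext j; fin_cases j <;> rfl

lemma mem_seg_vert (u : ℝ) {lo hi c : ℝ} (h1 : lo ≤ c) (h2 : c ≤ hi) :
    ptE u c ∈ segment ℝ (ptE u lo) (ptE u hi) := by
  have hc : c ∈ segment ℝ lo hi := by
    rw [segment_eq_Icc (h1.trans h2)]; exact ⟨h1, h2⟩
  obtain ⟨a, b, ha, hb, hab, habc⟩ := hc
  rw [smul_eq_mul, smul_eq_mul] at habc
  refine ⟨a, b, ha, hb, hab, ?_⟩
  ext j; fin_cases j <;>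
    simp [ptE, PiLp.add_apply, PiLp.smul_apply, smul_eq_mul] <;>
    first | linear_combination u * hab | linarith [habc]

lemma mem_seg_horiz (u : ℝ) {lo hi c : ℝ} (h1 : lo ≤ c) (h2 : c ≤ hi) :
    ptE c u ∈ segment ℝ (ptE lo u) (ptE hi u) := by
  have hc : c ∈ segment ℝ lo hi := by
    rw [segment_eq_Icc (h1.trans h2)]; exact ⟨h1, h2⟩
  obtain ⟨a, b, ha, hb, hab, habc⟩ := hc
  rw [smul_eq_mul, smul_eq_mul] at habc
  refine ⟨a, b, ha, hb, hab, ?_⟩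
  ext j; fin_cases j <;>
    simp [ptE, PiLp.add_apply, PiLp.smul_apply, smul_eq_mul] <;>
    first | linear_combination u * hab | linarith [habc]

lemma coord_abs_le_norm (q : E2) (j : Fin 2) : |q j| ≤ ‖q‖ := by
  rw [EuclideanSpace.norm_eq, Fin.sum_univ_two, ← Real.sqrt_sq_eq_abs]
  apply Real.sqrt_le_sqrt
  fin_cases j <;> simp <;> nlinarith [sq_nonneg (q 0), sq_nonneg (q 1)]

lemma dist_eq2 (p q : E2) : dist p q = Real.sqrt ((p 0 - q 0)^2 + (p 1 - q 1)^2) := by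
  rw [EuclideanSpace.dist_eq, Fin.sum_univ_two]
  simp [Real.dist_eq, sq_abs]

def myBox (a b : ℝ) : Set E2 := {p : E2 | p 0 ∈ Icc 0 a ∧ p 1 ∈ Icc 0 b}
def mySq (c : E2) (a b : ℝ) : Set E2 := (c + ·) '' myBox a b

lemma mem_mySq {q c : E2} {a b : ℝ} :
    q ∈ mySq c a b ↔ (q 0 - c 0 ∈ Icc 0 a ∧ q 1 - c 1 ∈ Icc 0 b) := by
  constructor
  · rintro ⟨p, hp, rfl⟩
    simpa [PiLp.add_apply, myBox] using hp
  · rintro h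
    refine ⟨q - c, ?_, by show c + (q - c) = q; rw [add_comm, sub_add_cancel]⟩
    constructor
    · simpa [PiLp.sub_apply] using h.1
    · simpa [PiLp.sub_apply] using h.2

lemma isRect_mySq (c : E2) (a b : ℝ) : IsRectangle (mySq c a b) a b := by
  refine ⟨IsometryEquiv.addLeft c, ?_⟩
  ext q
  simp [mySq, myBox]

lemma vol_myBox (a b : ℝ) : volume (myBox a b) = ENNReal.ofReal a * ENNReal.ofReal b := by
  have h : myBox a b
      = (MeasurableEquiv.toLp 2 (Fin 2 → ℝ)).symm ⁻¹' (Set.univ.pi fun i => Icc 0 (![a,b] i)) := by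
    ext p
    simp only [myBox, mem_setOf_eq, mem_preimage, mem_univ_pi, Fin.forall_fin_two]
    simp [MeasurableEquiv.toLp]
    rfl
  rw [h, (EuclideanSpace.volume_preserving_symm_measurableEquiv_toLp (ι := Fin 2)).measure_preimage]
  · rw [volume_pi_pi]
    simp [Real.volume_Icc, Fin.prod_univ_two]
  · exact (MeasurableSet.univ_pi fun i => measurableSet_Icc).nullMeasurableSet

lemma vol_mySq (c : E2) (a b : ℝ) :
    volume (mySq c a b) = ENNReal.ofReal a * ENNReal.ofReal b := by
  rw [mySq, show (c + ·) '' myBox a b = (fun x => -c + x) ⁻¹' myBox a b from ?_,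
    measure_preimage_add, vol_myBox]
  rw [← Set.image_add_left]

lemma closed_myBox (a b : ℝ) : IsClosed (myBox a b) := by
  have h0 : Continuous fun p : E2 => p 0 :=
    (EuclideanSpace.proj (0:Fin 2) : E2 →L[ℝ] ℝ).continuous
  have h1 : Continuous fun p : E2 => p 1 :=
    (EuclideanSpace.proj (1:Fin 2) : E2 →L[ℝ] ℝ).continuous
  exact (isClosed_Icc.preimage h0).inter (isClosed_Icc.preimage h1)

lemma closed_mySq (c : E2) (a b : ℝ) : IsClosed (mySq c a b) := by
  rw [mySq, show (c + ·) '' myBox a b = (fun x => -c + x) ⁻¹' myBox a b from ?_]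
  · exact (closed_myBox a b).preimage (by continuity)
  · rw [← Set.image_add_left]

lemma subdiffSet_mono (ψ : E2 → ℝ) {A B : Set E2} (h : A ⊆ B) :
    subdiffSet ψ A ⊆ subdiffSet ψ B := by
  intro z hz
  simp only [subdiffSet, mem_iUnion] at hz ⊢
  obtain ⟨p, hp, hzp⟩ := hz
  exact ⟨p, h hp, hzp⟩

set_option maxHeartbeats 2000000 in
/-- lower bound `diam ∂ψ(U_δ) ≥ √(δℓ/(λ₁λ₂))`. -/
theorem stmt13 (Ω : Set E2) (hΩo : IsOpen Ω) (hΩb : Bornology.IsBounded Ω)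
    (ψ : E2 → ℝ) (hψ : ConvexOn ℝ Set.univ ψ)
    (μ ν : Measure E2) (hμl : IsLocallyFiniteMeasure μ) (hνl : IsLocallyFiniteMeasure ν)
    (h₁ h₂ l₁ l₂ : ℝ) (hh₁ : 0 ≤ h₁) (hh₂ : 0 ≤ h₂) (hl₁ : 0 < l₁) (hl₂ : 0 < l₂)
    (htrans : TransportIneq Ω ψ μ ν) (hass : MeasAssump Ω ψ μ ν h₁ h₂ l₁ l₂)
    (x y : E2) (hx : x ∈ Ω) (hy : y ∈ Ω) (hxy : x ≠ y)
    (δ : ℝ) (hδ : 0 < δ) (hU : Useg x y δ ⊆ Ω)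
    (ℓ : ℝ) (hℓ : ℓ = dist x y / 2)
    (hcond1 : h₁ ≤ min δ ℓ) (hcond2 : h₂ ^ 2 < δ * ℓ / (l₁ * l₂)) :
    Real.sqrt (δ * ℓ / (l₁ * l₂)) ≤ diam (subdiffSet ψ (Useg x y δ)) := by
  classical
  set U : Set E2 := Useg x y δ with hUdef
  set D : Set E2 := subdiffSet ψ U with hDdef
  clear_value U D
  have hdist : 0 < dist x y := dist_pos.2 hxy
  have hℓpos : 0 < ℓ := by rw [hℓ]; positivity
  have hargpos : 0 < δ * ℓ / (l₁ * l₂) := by positivity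
  set s : ℝ := Real.sqrt (δ * ℓ / (l₁ * l₂)) with hsdef
  clear_value s
  have hs2 : s ^ 2 = δ * ℓ / (l₁ * l₂) := by rw [hsdef]; exact Real.sq_sqrt hargpos.le
  by_contra hcon
  push_neg at hcon
  -- ### boundedness of D
  obtain ⟨r, hr⟩ := hΩb.subset_closedBall 0
  set R₀ : ℝ := max (r + 1) 1 with hR₀
  clear_value R₀
  have hpR : ∀ p ∈ U, ‖p‖ + 1 ≤ R₀ := by
    intro p hp
    have h := hr (hU hp)
    rw [mem_closedBall, dist_zero_right] at h
    calc ‖p‖ + 1 ≤ r + 1 := by linarith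
    _ ≤ R₀ := by rw [hR₀]; exact le_max_left _ _
  set M : ℝ := max (max (ψ (ptE (-R₀) (-R₀))) (ψ (ptE (-R₀) R₀)))
               (max (ψ (ptE R₀ (-R₀))) (ψ (ptE R₀ R₀))) with hM
  clear_value M
  have hub : ∀ q : E2, ‖q‖ ≤ R₀ → ψ q ≤ M := by
    intro q hq
    have h0 := abs_le.1 ((coord_abs_le_norm q 0).trans hq)
    have h1 := abs_le.1 ((coord_abs_le_norm q 1).trans hq)
    have hvert : q ∈ segment ℝ (ptE (q 0) (-R₀)) (ptE (q 0) R₀) := by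
      have h := mem_seg_vert (q 0) h1.1 h1.2
      rwa [ptE_eta] at h
    have hb1 : ψ (ptE (q 0) (-R₀)) ≤ M := by
      have hh : ptE (q 0) (-R₀) ∈ segment ℝ (ptE (-R₀) (-R₀)) (ptE R₀ (-R₀)) :=
        mem_seg_horiz (-R₀) h0.1 h0.2
      refine (hψ.le_on_segment (mem_univ _) (mem_univ _) hh).trans (max_le ?_ ?_)
      · rw [hM]; exact le_trans (le_max_left _ _) (le_max_left _ _)
      · rw [hM]; exact le_trans (le_max_left _ _) (le_max_right _ _)
    have hb2 : ψ (ptE (q 0) R₀) ≤ M := by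
      have hh : ptE (q 0) R₀ ∈ segment ℝ (ptE (-R₀) R₀) (ptE R₀ R₀) :=
        mem_seg_horiz R₀ h0.1 h0.2
      refine (hψ.le_on_segment (mem_univ _) (mem_univ _) hh).trans (max_le ?_ ?_)
      · rw [hM]; exact le_trans (le_max_right _ _) (le_max_left _ _)
      · rw [hM]; exact le_trans (le_max_right _ _) (le_max_right _ _)
    exact (hψ.le_on_segment (mem_univ _) (mem_univ _) hvert).trans (max_le hb1 hb2)
  have hlb : ∀ q : E2, ‖q‖ ≤ R₀ → 2 * ψ 0 - M ≤ ψ q := by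
    intro q hq
    have hneg : ψ (-q) ≤ M := hub (-q) (by rwa [norm_neg])
    have hmid := hψ.2 (mem_univ q) (mem_univ (-q))
      (by norm_num : (0:ℝ) ≤ 1/2) (by norm_num : (0:ℝ) ≤ 1/2) (by norm_num)
    rw [show (1/2 : ℝ) • q + (1/2 : ℝ) • (-q) = 0 by
      rw [smul_neg]; exact add_neg_cancel _] at hmid
    simp only [smul_eq_mul] at hmid
    linarith
  set C : ℝ := max (2 * M - 2 * ψ 0) 0 with hCdef
  clear_value C
  have hDsub : D ⊆ closedBall 0 C := by
    intro z hz
    simp only [hDdef, subdiffSet, mem_iUnion] at hz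
    obtain ⟨p, hpU, hzp⟩ := hz
    rw [mem_closedBall, dist_zero_right]
    rcases eq_or_ne z 0 with rfl | hz0
    · rw [norm_zero, hCdef]; exact le_max_right _ _
    · have hnz : (0:ℝ) < ‖z‖ := norm_pos_iff.2 hz0
      have hvnorm : ‖(‖z‖⁻¹ • z : E2)‖ = 1 := by
        rw [norm_smul, norm_inv, norm_norm, inv_mul_cancel₀ hnz.ne']
      have hkey := hzp (p + ‖z‖⁻¹ • z)
      rw [add_sub_cancel_left] at hkey
      have hinner : ⟪z, (‖z‖⁻¹ • z : E2)⟫ = ‖z‖ := by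
        rw [real_inner_smul_right, real_inner_self_eq_norm_sq, sq]
        field_simp
      rw [hinner] at hkey
      have hpn := hpR p hpU
      have h1 : ψ (p + ‖z‖⁻¹ • z) ≤ M := hub _ (by
        calc ‖p + ‖z‖⁻¹ • z‖ ≤ ‖p‖ + ‖(‖z‖⁻¹ • z : E2)‖ := norm_add_le _ _
        _ = ‖p‖ + 1 := by rw [hvnorm]
        _ ≤ R₀ := hpn)
      have h2 : 2 * ψ 0 - M ≤ ψ p := hlb p (by linarith)
      calc ‖z‖ ≤ 2 * M - 2 * ψ 0 := by linarith
      _ ≤ C := by rw [hCdef]; exact le_max_left _ _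
  have hDbd : Bornology.IsBounded D := (isBounded_closedBall).subset hDsub
  -- ### the covering square
  have hd0 : 0 ≤ diam D := diam_nonneg
  set aa : ℝ := max (diam D) h₂ with haa
  clear_value aa
  have hh2s : h₂ < s := by rw [hsdef]; exact (Real.lt_sqrt hh₂).2 hcond2
  have has : aa < s := by rw [haa]; exact max_lt hcon hh2s
  have ha0 : 0 ≤ aa := by rw [haa]; exact le_trans hd0 (le_max_left _ _)
  set cc : E2 := ptE (sInf ((fun z : E2 => z 0) '' D)) (sInf ((fun z : E2 => z 1) '' D))
    with hcc
  clear_value cc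
  have hccj : ∀ j : Fin 2, ∀ z ∈ D, cc j ≤ z j ∧ z j ≤ cc j + diam D := by
    intro j z hz
    have hbdd : BddBelow ((fun z : E2 => z j) '' D) := by
      refine ⟨-C, ?_⟩
      rintro _ ⟨ww, hww, rfl⟩
      have hwC : ‖ww‖ ≤ C := by
        have h := hDsub hww; rwa [mem_closedBall, dist_zero_right] at h
      have h := abs_le.1 ((coord_abs_le_norm ww j).trans hwC)
      linarith [h.1]
    have hccj_eq : cc j = sInf ((fun z : E2 => z j) '' D) := by
      fin_cases j <;> simp [hcc]
    constructor
    · rw [hccj_eq]; exact csInf_le hbdd ⟨z, hz, rfl⟩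
    · rw [hccj_eq]
      have hle : z j - diam D ≤ sInf ((fun z : E2 => z j) '' D) := by
        apply le_csInf ⟨z j, mem_image_of_mem (fun w : E2 => w j) hz⟩
        rintro _ ⟨ww, hww, rfl⟩
        have hzw : dist z ww ≤ diam D := dist_le_diam_of_mem hDbd hz hww
        have habs : |z j - ww j| ≤ dist z ww := by
          have h := coord_abs_le_norm (z - ww) j
          rwa [PiLp.sub_apply, ← dist_eq_norm] at h
        have h := abs_le.1 (habs.trans hzw)
        linarith [h.1]
      linarith
  have hDR : D ⊆ mySq cc aa aa := by
    intro z hz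
    rw [mem_mySq]
    have h0 := hccj 0 z hz
    have h1 := hccj 1 z hz
    have hda : diam D ≤ aa := by rw [haa]; exact le_max_left _ _
    exact ⟨⟨by linarith [h0.1], by linarith [h0.2]⟩, ⟨by linarith [h1.1], by linarith [h1.2]⟩⟩
  -- ### the family of small squares along the segment
  set k : ℕ := Nat.floor (ℓ / δ) + 1 with hk
  clear_value k
  set w : ℝ := 5/4 * δ with hw
  clear_value w
  have hwpos : 0 < w := by rw [hw]; positivity
  have hunorm : ‖y - x‖ = 2 * ℓ := by
    rw [← dist_eq_norm, dist_comm, hℓ]; ring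
  set zc : ℕ → E2 := fun i => x + ((i * δ) / ℓ) • (y - x) with hzc
  clear_value zc
  have hgen : ∀ t : ℝ, 0 ≤ t → t ≤ 1 → x + t • (y - x) ∈ segment ℝ x y := by
    intro t ht0 ht1
    exact ⟨1 - t, t, by linarith, ht0, by ring,
      by rw [sub_smul, one_smul, smul_sub]; abel⟩
  have hzcseg : ∀ i, i < k → zc i ∈ segment ℝ x y := by
    intro i hi
    have hi' : (i:ℝ) ≤ ℓ / δ := by
      rw [hk] at hi
      have h : i ≤ Nat.floor (ℓ / δ) := Nat.lt_succ_iff.1 hi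
      exact le_trans (Nat.cast_le.2 h) (Nat.floor_le (by positivity))
    rw [hzc]
    apply hgen
    · positivity
    · rw [div_le_one hℓpos]
      calc (i:ℝ) * δ ≤ (ℓ/δ) * δ := by nlinarith
      _ = ℓ := by field_simp
  set S : ℕ → Set E2 := fun i => mySq (zc i - ptE (w/2) (w/2)) w w with hS
  clear_value S
  have hmemS : ∀ i (q : E2),
      q ∈ S i ↔ (|q 0 - zc i 0| ≤ w/2 ∧ |q 1 - zc i 1| ≤ w/2) := by
    intro i q
    simp only [hS, mem_mySq, PiLp.sub_apply, ptE_zero, ptE_one, mem_Icc, abs_le]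
    constructor <;> rintro ⟨⟨a1, a2⟩, ⟨b1, b2⟩⟩ <;>
      exact ⟨⟨by linarith, by linarith⟩, ⟨by linarith, by linarith⟩⟩
  have hSball : ∀ i, S i ⊆ closedBall (zc i) δ := by
    intro i q hq
    rw [hmemS] at hq
    rw [mem_closedBall, dist_eq2]
    have a0 := abs_le.1 hq.1
    have a1 := abs_le.1 hq.2
    have e0 : (q 0 - zc i 0)^2 ≤ (w/2)^2 := sq_le_sq' a0.1 a0.2
    have e1 : (q 1 - zc i 1)^2 ≤ (w/2)^2 := sq_le_sq' a1.1 a1.2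
    have hsum : (q 0 - zc i 0)^2 + (q 1 - zc i 1)^2 ≤ δ^2 := by
      rw [hw] at e0 e1
      nlinarith [hδ.le]
    calc Real.sqrt ((q 0 - zc i 0)^2 + (q 1 - zc i 1)^2)
        ≤ Real.sqrt (δ^2) := Real.sqrt_le_sqrt hsum
    _ = δ := Real.sqrt_sq hδ.le
  have hSU : ∀ i, i < k → S i ⊆ U := by
    intro i hi q hq
    rw [hUdef, Useg]
    exact mem_biUnion (hzcseg i hi) (hSball i hq)
  -- the coordinate in which the segment direction is large
  have hmaxcoord : ∃ j : Fin 2, Real.sqrt 2 * ℓ ≤ |(y - x) j| := by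
    have h2 : (2*ℓ)^2 = (y - x) 0 ^ 2 + (y - x) 1 ^ 2 := by
      rw [← hunorm, EuclideanSpace.norm_eq, Fin.sum_univ_two,
        Real.sq_sqrt (by positivity)]
      simp [Real.norm_eq_abs, sq_abs]
    rcases le_total ((y - x) 0 ^ 2) ((y - x) 1 ^ 2) with hc | hc
    · refine ⟨1, ?_⟩
      rw [← Real.sqrt_sq_eq_abs]
      calc Real.sqrt 2 * ℓ = Real.sqrt (2 * ℓ^2) := by
            rw [Real.sqrt_mul (by norm_num), Real.sqrt_sq hℓpos.le]
      _ ≤ Real.sqrt ((y - x) 1 ^ 2) := Real.sqrt_le_sqrt (by nlinarith)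
    · refine ⟨0, ?_⟩
      rw [← Real.sqrt_sq_eq_abs]
      calc Real.sqrt 2 * ℓ = Real.sqrt (2 * ℓ^2) := by
            rw [Real.sqrt_mul (by norm_num), Real.sqrt_sq hℓpos.le]
      _ ≤ Real.sqrt ((y - x) 0 ^ 2) := Real.sqrt_le_sqrt (by nlinarith)
  have hdisj : (↑(Finset.range k) : Set ℕ).PairwiseDisjoint S := by
    obtain ⟨j, hj⟩ := hmaxcoord
    intro i _ i' _ hne
    rw [Function.onFun, Set.disjoint_left]
    intro q hq hq'
    rw [hmemS] at hq hq'
    have hji : |q j - zc i j| ≤ w/2 := by fin_cases j; exacts [hq.1, hq.2]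
    have hji' : |q j - zc i' j| ≤ w/2 := by fin_cases j; exacts [hq'.1, hq'.2]
    have hzz : |zc i j - zc i' j| ≤ w := by
      calc |zc i j - zc i' j| = |(zc i j - q j) + (q j - zc i' j)| := by ring_nf
      _ ≤ |zc i j - q j| + |q j - zc i' j| := abs_add_le _ _
      _ ≤ w/2 + w/2 := add_le_add (by rwa [abs_sub_comm]) hji'
      _ = w := by ring
    have hcoord : zc i j - zc i' j = ((i:ℝ) - i') * (δ / ℓ) * (y - x) j := by
      simp only [hzc, PiLp.add_apply, PiLp.smul_apply, smul_eq_mul]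
      field_simp
      ring
    have habs : (1:ℝ) ≤ |(i:ℝ) - i'| := by
      rcases hne.lt_or_gt with h | h
      · rw [abs_sub_comm, abs_of_nonneg (by
          have : (i:ℝ) + 1 ≤ i' := by exact_mod_cast h
          linarith)]
        have : (i:ℝ) + 1 ≤ i' := by exact_mod_cast h
        linarith
      · rw [abs_of_nonneg (by
          have : (i':ℝ) + 1 ≤ i := by exact_mod_cast h
          linarith)]
        have : (i':ℝ) + 1 ≤ i := by exact_mod_cast h
        linarith
    have hlow : Real.sqrt 2 * δ ≤ |zc i j - zc i' j| := by
      rw [hcoord, abs_mul, abs_mul, abs_of_nonneg (by positivity : (0:ℝ) ≤ δ/ℓ)]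
      have h1 : (1:ℝ) * (Real.sqrt 2 * ℓ) ≤ |(i:ℝ) - i'| * |(y - x) j| :=
        mul_le_mul habs hj (by positivity) (abs_nonneg _)
      calc Real.sqrt 2 * δ = (δ/ℓ) * (1 * (Real.sqrt 2 * ℓ)) := by
            field_simp
      _ ≤ (δ/ℓ) * (|(i:ℝ) - i'| * |(y - x) j|) :=
            mul_le_mul_of_nonneg_left h1 (by positivity)
      _ = |(i:ℝ) - i'| * (δ/ℓ) * |(y - x) j| := by ring
    have hs2' : (5/4:ℝ) < Real.sqrt 2 := by
      rw [show (5/4:ℝ) = Real.sqrt ((5/4)^2) from (Real.sqrt_sq (by norm_num)).symm]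
      exact Real.sqrt_lt_sqrt (by positivity) (by norm_num)
    have hcontra := hlow.trans hzz
    rw [hw] at hcontra
    nlinarith
  -- ### the union A and the measure estimates
  set A : Set E2 := ⋃ i ∈ Finset.range k, S i with hA
  clear_value A
  have hSmeas : ∀ i, MeasurableSet (S i) := by
    intro i
    have : IsClosed (S i) := by
      simp only [hS]; exact closed_mySq _ _ _
    exact this.measurableSet
  have hAmeas : MeasurableSet A := by
    rw [hA]; exact (Finset.range k).measurableSet_biUnion (fun i _ => hSmeas i)
  have hAU : A ⊆ U := by
    rw [hA]; intro q hq
    simp only [mem_iUnion, Finset.mem_range, exists_prop] at hq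
    obtain ⟨i, hi, hqi⟩ := hq
    exact hSU i hi hqi
  have hAΩ : A ⊆ Ω := hAU.trans hU
  have hvolS : ∀ i, volume (S i) = ENNReal.ofReal (w * w) := by
    intro i
    simp only [hS]
    rw [vol_mySq, ← ENNReal.ofReal_mul hwpos.le]
  have hvolA : volume A = (k : ℝ≥0∞) * ENNReal.ofReal (w * w) := by
    rw [hA, measure_biUnion_finset hdisj (fun i _ => hSmeas i)]
    rw [Finset.sum_congr rfl (fun i _ => hvolS i), Finset.sum_const,
      Finset.card_range, nsmul_eq_mul]
  have hμA : volume A ≤ ENNReal.ofReal l₁ * μ A := by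
    rw [hA, measure_biUnion_finset hdisj (fun i _ => hSmeas i),
      measure_biUnion_finset hdisj (fun i _ => hSmeas i), Finset.mul_sum]
    apply Finset.sum_le_sum
    intro i hi
    rw [Finset.mem_range] at hi
    have hrect : IsRectangle (S i) w w := by
      simp only [hS]; exact isRect_mySq _ _ _
    have hh1w : h₁ ≤ w := by
      have := le_trans hcond1 (min_le_left δ ℓ)
      rw [hw]; linarith
    exact hass.1 (S i) w w hrect hh1w hh1w ((hSU i hi).trans hU)
  have hsub1 : subdiffSet ψ A ⊆ mySq cc aa aa ∩ subdiffSet ψ Ω := by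
    intro z hz
    refine ⟨hDR ?_, subdiffSet_mono ψ hAΩ hz⟩
    rw [hDdef]
    exact subdiffSet_mono ψ hAU hz
  have hchain : volume A ≤
      ENNReal.ofReal l₁ * (ENNReal.ofReal l₂ * volume (mySq cc aa aa)) := by
    calc volume A ≤ ENNReal.ofReal l₁ * μ A := hμA
    _ ≤ ENNReal.ofReal l₁ * ν (subdiffSet ψ A) :=
        mul_le_mul_right (htrans A hAΩ hAmeas) _
    _ ≤ ENNReal.ofReal l₁ * ν (mySq cc aa aa ∩ subdiffSet ψ Ω) :=
        mul_le_mul_right (measure_mono hsub1) _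
    _ ≤ _ := mul_le_mul_right (hass.2 (mySq cc aa aa) aa aa (isRect_mySq _ _ _)
        (by rw [haa]; exact le_max_right _ _) (by rw [haa]; exact le_max_right _ _)) _
  rw [hvolA, vol_mySq, ← ENNReal.ofReal_mul ha0, ← ENNReal.ofReal_mul hl₂.le,
    ← ENNReal.ofReal_mul hl₁.le, ← ENNReal.ofReal_natCast k,
    ← ENNReal.ofReal_mul (by positivity)] at hchain
  rw [ENNReal.ofReal_le_ofReal_iff
    (mul_nonneg hl₁.le (mul_nonneg hl₂.le (mul_nonneg ha0 ha0)))] at hchain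
  have hkl : ℓ / δ < (k:ℝ) := by
    rw [hk]; push_cast; exact Nat.lt_floor_add_one _
  have h1 : δ * ℓ < (k:ℝ) * (w * w) := by
    have hww : δ^2 ≤ w * w := by rw [hw]; nlinarith
    calc δ * ℓ = (ℓ/δ) * δ^2 := by field_simp
    _ < (k:ℝ) * δ^2 := mul_lt_mul_of_pos_right hkl (by positivity)
    _ ≤ (k:ℝ) * (w*w) := mul_le_mul_of_nonneg_left hww (by positivity)
  have h2 : l₁ * (l₂ * (aa * aa)) < δ * ℓ := by
    have haa2 : aa * aa < s * s := mul_self_lt_mul_self ha0 has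
    have hss : s * s = δ * ℓ / (l₁ * l₂) := by rw [← hs2]; ring
    calc l₁ * (l₂ * (aa*aa)) < l₁ * (l₂ * (s*s)) :=
        mul_lt_mul_of_pos_left (mul_lt_mul_of_pos_left haa2 hl₂) hl₁
    _ = δ * ℓ := by rw [hss]; field_simp
  linarith
end
end

section
/- There exists a universal constant C > 0 such that the following holds. Let ψ : ℝ² → ℝ be convex with ψ(a) = ψ(b) = 0, where a = (−ℓ,0), b = (ℓ,0), ℓ > 0; set ε := −min_{t∈[0,1]} ψ((1−t)a + tb) ≥ 0, let δ > 0 and let K > 0 satisfy |z| ≤ K for every z ∈ ∂ψ(y) with y ∈ [−ℓ/2, ℓ/2] × [0, 2δ]. Fix x⊥ > 0 with ε/K ≤ x⊥ and x⊥ ≤ δ, fix ξ ∈ ℝ and η > 0. Let y', y'' ∈ Ω_{x⊥} := {y : |y∥| ≤ ℓ/2, x⊥/2 ≤ y⊥ ≤ 2x⊥} with y' ≠ y'', and suppose there exist z' ∈ ∂ψ(y') with |z'⊥ − ξ| ≤ η and z'' ∈ ∂ψ(y'') with |z''⊥ − ξ| ≤ η. If |y'∥ − y''∥| ≤ ( ℓ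 η / (C K x⊥) ) · |y'⊥ − y''⊥|, then for every s ∈ (0,1) and every z ∈ ∂ψ( s y' + (1−s) y'' ), one has |z⊥ − ξ| ≤ 2η. -/
open MeasureTheory Set Metric Filter
open scoped RealInnerProductSpace ENNReal

noncomputable section

lemma my_inner2 (x y : E2) : ⟪x, y⟫ = x 0 * y 0 + x 1 * y 1 := by
  simp [PiLp.inner_apply, Fin.sum_univ_two, RCLike.inner_apply, mul_comm]

lemma my_abs_comp_le (w : E2) (i : Fin 2) : |w i| ≤ ‖w‖ := by
  have h := abs_real_inner_le_norm (EuclideanSpace.single i (1:ℝ)) w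
  simpa [EuclideanSpace.inner_single_left] using h

lemma my_exists_subgradient (ψ : E2 → ℝ) (hψ : ConvexOn ℝ Set.univ ψ) (x : E2) :
    ∃ z : E2, z ∈ subdiff ψ x := by
  have hcont : Continuous ψ := by
    rw [← continuousOn_univ]
    exact hψ.continuousOn isOpen_univ
  set S : Set (E2 × ℝ) := {p | ψ p.1 < p.2} with hS
  have hSopen : IsOpen S := isOpen_lt (hcont.comp continuous_fst) continuous_snd
  have hSconv : Convex ℝ S := by
    rintro ⟨p, pt⟩ hp ⟨q, qt⟩ hq u v hu hv huv
    simp only [hS, Set.mem_setOf_eq] at hp hq ⊢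
    have h2 := hψ.2 (Set.mem_univ p) (Set.mem_univ q) hu hv huv
    simp only [smul_eq_mul] at h2
    have hlt : u * ψ p + v * ψ q < u * pt + v * qt := by
      rcases eq_or_lt_of_le hu with h | h
      · have hv1 : v = 1 := by linarith
        rw [← h, hv1]; simpa using hq
      · have h1 := mul_lt_mul_of_pos_left hp h
        have h2' := mul_le_mul_of_nonneg_left hq.le hv
        linarith
    exact lt_of_le_of_lt h2 hlt
  have hdisj : (x, ψ x) ∉ S := by simp [hS]
  obtain ⟨f, hf⟩ := geometric_hahn_banach_open_point hSconv hSopen hdisj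
  set c : ℝ := f ((0 : E2), (1 : ℝ)) with hc
  have hft : ∀ (p : E2) (t u : ℝ), f (p, t + u) = f (p, t) + u * c := by
    intro p t u
    have he : ((p, t + u) : E2 × ℝ) = (p, t) + u • ((0 : E2), (1:ℝ)) := by
      simp [Prod.ext_iff]
    rw [he, map_add, f.map_smul, smul_eq_mul, hc]
  have hcneg : c < 0 := by
    have h1 : ((x, ψ x + 1) : E2 × ℝ) ∈ S := by simp [hS]
    have h2 := hf _ h1
    rw [hft x (ψ x) 1] at h2
    linarith
  have hc0 : c ≠ 0 := hcneg.ne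
  have hkey : ∀ p : E2, f (p, ψ p) ≤ f (x, ψ x) := by
    intro p
    by_contra h
    push_neg at h
    set D := f (p, ψ p) - f (x, ψ x) with hD
    have hDpos : 0 < D := by simp [hD]; linarith
    set s := D / (-c) with hs
    have hspos : 0 < s := div_pos hDpos (by linarith)
    have h1 : ((p, ψ p + s) : E2 × ℝ) ∈ S := by simp [hS, hspos]
    have h2 := hf _ h1
    rw [hft p (ψ p) s] at h2
    have hsc : s * c = -D := by
      rw [hs, div_neg, neg_mul, div_mul_cancel₀ _ hc0]
    rw [hsc] at h2
    simp only [hD] at h2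
    linarith
  have hfull : ∀ (p : E2) (t : ℝ), f (p, t) = f (p, 0) + t * c := by
    intro p t
    have := hft p 0 t
    rwa [zero_add] at this
  set g : E2 →L[ℝ] ℝ := f.comp (ContinuousLinearMap.inl ℝ E2 ℝ) with hg
  refine ⟨(InnerProductSpace.toDual ℝ E2).symm ((-c)⁻¹ • g), ?_⟩
  intro y
  rw [InnerProductSpace.toDual_symm_apply]
  have h2 : f (y, 0) + ψ y * c ≤ f (x, 0) + ψ x * c := by
    have h4 := hkey y
    rw [hfull y (ψ y), hfull x (ψ x)] at h4
    exact h4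
  have hgv : ∀ v : E2, g v = f (v, 0) := fun v => rfl
  have h1 : g (y - x) = f (y, 0) - f (x, 0) := by
    rw [hgv]
    have he : ((y - x, (0:ℝ)) : E2 × ℝ) = (y, (0:ℝ)) - (x, (0:ℝ)) := by simp [Prod.ext_iff]
    rw [he, map_sub]
  have h3 : ((-c)⁻¹ • g) (y - x) = (-c)⁻¹ * (f (y, 0) - f (x, 0)) := by
    rw [ContinuousLinearMap.smul_apply, h1, smul_eq_mul]
  rw [h3]
  have hcpos : 0 < -c := by linarith
  have h5 : (-c)⁻¹ * (f (y, 0) - f (x, 0)) ≤ ψ y - ψ x := by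
    rw [inv_mul_le_iff₀ hcpos]
    nlinarith
  linarith


set_option maxHeartbeats 1000000 in
lemma my_hlow (ℓ δ : ℝ) (hℓ : 0 < ℓ) (hδ : 0 < δ) (ψ : E2 → ℝ) (hψ : ConvexOn ℝ Set.univ ψ)
    (a b : E2) (ha0 : a 0 = -ℓ) (ha1 : a 1 = 0) (hb0 : b 0 = ℓ) (hb1 : b 1 = 0)
    (ε : ℝ) (hε : ε = - sInf ((fun t : ℝ => ψ ((1 - t) • a + t • b)) '' Icc 0 1))
    (K : ℝ)
    (hKbd : ∀ y : E2, |y 0| ≤ ℓ / 2 → y 1 ∈ Icc 0 (2 * δ) → ∀ z ∈ subdiff ψ y, ‖z‖ ≤ K)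
    (u : E2) (hu0 : |u 0| ≤ ℓ/2) (hu1 : 0 ≤ u 1) (hu2 : u 1 ≤ 2*δ) :
    -ε - K * u 1 ≤ ψ u := by
  have hcont : Continuous ψ := by
    rw [← continuousOn_univ]; exact hψ.continuousOn isOpen_univ
  have hu0' := abs_le.1 hu0
  set t : ℝ := (u 0 + ℓ)/(2*ℓ) with ht
  set p : E2 := (1-t) • a + t • b with hp
  have ht0 : 0 ≤ t := by apply div_nonneg <;> linarith
  have ht1 : t ≤ 1 := by rw [ht, div_le_one (by linarith)]; linarith
  have hp0 : p 0 = u 0 := by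
    simp only [hp, PiLp.add_apply, PiLp.smul_apply, smul_eq_mul, ha0, hb0, ht]
    field_simp
    ring
  have hp1 : p 1 = 0 := by
    simp [hp, ha1, hb1]
  have hmem : ψ p ∈ (fun t : ℝ => ψ ((1 - t) • a + t • b)) '' Icc (0:ℝ) 1 :=
    ⟨t, ⟨ht0, ht1⟩, rfl⟩
  have hbdd : BddBelow ((fun t : ℝ => ψ ((1 - t) • a + t • b)) '' Icc (0:ℝ) 1) := by
    apply IsCompact.bddBelow_image isCompact_Icc
    apply Continuous.continuousOn
    exact hcont.comp (((continuous_const.sub continuous_id).smul continuous_const).add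
      (continuous_id.smul continuous_const))
  have hψp : -ε ≤ ψ p := by
    rw [hε, neg_neg]; exact csInf_le hbdd hmem
  obtain ⟨w, hw⟩ := my_exists_subgradient ψ hψ p
  have hwK : ‖w‖ ≤ K := hKbd p (by rw [hp0]; exact hu0)
    (by rw [hp1]; exact ⟨le_refl 0, by linarith⟩) w hw
  have h1 := hw u
  rw [my_inner2] at h1
  have hsub0 : (u - p) 0 = 0 := by simp [hp0]
  have hsub1 : (u - p) 1 = u 1 := by simp [hp1]
  rw [hsub0, hsub1] at h1
  have hw1 := abs_le.1 (le_trans (my_abs_comp_le w 1) hwK)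
  nlinarith [mul_le_mul_of_nonneg_right hw1.1 hu1]

set_option maxHeartbeats 1000000 in
lemma my_hhor (ℓ δ : ℝ) (hℓ : 0 < ℓ) (hδ : 0 < δ) (ψ : E2 → ℝ) (hψ : ConvexOn ℝ Set.univ ψ)
    (a b : E2) (ha0 : a 0 = -ℓ) (ha1 : a 1 = 0) (hb0 : b 0 = ℓ) (hb1 : b 1 = 0)
    (hψa : ψ a = 0) (hψb : ψ b = 0)
    (ε : ℝ) (hε : ε = - sInf ((fun t : ℝ => ψ ((1 - t) • a + t • b)) '' Icc 0 1))
    (K : ℝ) (hK : 0 < K)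
    (hKbd : ∀ y : E2, |y 0| ≤ ℓ / 2 → y 1 ∈ Icc 0 (2 * δ) → ∀ z ∈ subdiff ψ y, ‖z‖ ≤ K)
    (xp : ℝ) (hxp : 0 < xp) (hεle : ε ≤ K * xp) (hxpδ : xp ≤ δ)
    (u : E2) (hu0 : |u 0| ≤ ℓ/2) (hu1 : 0 ≤ u 1) (hu2 : u 1 ≤ 2*xp)
    (w : E2) (hw : w ∈ subdiff ψ u) :
    |w 0| ≤ 10*K*xp/ℓ := by
  have hu0' := abs_le.1 hu0
  have hψu : -ε - K * u 1 ≤ ψ u :=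
    my_hlow ℓ δ hℓ hδ ψ hψ a b ha0 ha1 hb0 hb1 ε hε K hKbd u hu0 hu1 (by linarith)
  have hwK : ‖w‖ ≤ K := hKbd u hu0 ⟨hu1, by linarith⟩ w hw
  have hw1 := abs_le.1 (le_trans (my_abs_comp_le w 1) hwK)
  have hA := hw a
  have hB := hw b
  rw [my_inner2] at hA hB
  have e1 : (a - u) 0 = -ℓ - u 0 := by simp [ha0]
  have e2 : (a - u) 1 = -(u 1) := by simp [ha1]
  have e3 : (b - u) 0 = ℓ - u 0 := by simp [hb0]
  have e4 : (b - u) 1 = -(u 1) := by simp [hb1]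
  rw [e1, e2] at hA
  rw [e3, e4] at hB
  rw [hψa] at hA
  rw [hψb] at hB
  have hM1 : -(w 0 * (ℓ + u 0)) ≤ w 1 * u 1 - ψ u := by nlinarith [hA]
  have hM2 : w 0 * (ℓ - u 0) ≤ w 1 * u 1 - ψ u := by nlinarith [hB]
  have hMnn : 0 ≤ w 1 * u 1 - ψ u := by nlinarith [hM1, hM2]
  have hMle : w 1 * u 1 - ψ u ≤ 5 * (K * xp) := by
    nlinarith [mul_le_mul_of_nonneg_right hw1.2 hu1]
  have key1 : -(w 0) * ℓ ≤ 10*K*xp := by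
    rcases le_or_gt 0 (-(w 0)) with h | h
    · nlinarith [hM1, hMle, mul_nonneg h (by linarith : (0:ℝ) ≤ ℓ + 2 * u 0)]
    · have h2 : -(w 0) * ℓ ≤ 0 := mul_nonpos_of_nonpos_of_nonneg h.le hℓ.le
      have h3 : (0:ℝ) ≤ 10*K*xp := by positivity
      linarith
  have key2 : w 0 * ℓ ≤ 10*K*xp := by
    rcases le_or_gt 0 (w 0) with h | h
    · nlinarith [hM2, hMle, mul_nonneg h (by linarith : (0:ℝ) ≤ ℓ - 2 * u 0)]
    · have h2 : w 0 * ℓ ≤ 0 := mul_nonpos_of_nonpos_of_nonneg h.le hℓ.le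
      have h3 : (0:ℝ) ≤ 10*K*xp := by positivity
      linarith
  have k1 : -(w 0) ≤ 10*K*xp/ℓ := by rw [le_div_iff₀ hℓ]; linarith [key1]
  have k2 : w 0 ≤ 10*K*xp/ℓ := by rw [le_div_iff₀ hℓ]; linarith [key2]
  rw [abs_le]
  exact ⟨by linarith, k2⟩

lemma my_mono (ψ : E2 → ℝ) (y' y'' : E2) (s : ℝ) (hs0 : 0 < s) (hs1 : s < 1)
    (z z' z'' : E2)
    (hz : z ∈ subdiff ψ (s • y' + (1 - s) • y''))
    (hz' : z' ∈ subdiff ψ y') (hz'' : z'' ∈ subdiff ψ y'') :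
    (z 1 - z' 1) * (y' 1 - y'' 1) ≤ (z' 0 - z 0) * (y' 0 - y'' 0) ∧
    (z'' 1 - z 1) * (y' 1 - y'' 1) ≤ (z 0 - z'' 0) * (y' 0 - y'' 0) := by
  set y : E2 := s • y' + (1 - s) • y'' with hy
  have hy0 : y 0 = s * y' 0 + (1-s) * y'' 0 := by simp [hy]
  have hy1 : y 1 = s * y' 1 + (1-s) * y'' 1 := by simp [hy]
  constructor
  · have h1 := hz y'
    have h2 := hz' y
    rw [my_inner2] at h1 h2
    have e1 : (y' - y) 0 = (1-s) * (y' 0 - y'' 0) := by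
      simp only [PiLp.sub_apply, hy0]; ring
    have e2 : (y' - y) 1 = (1-s) * (y' 1 - y'' 1) := by
      simp only [PiLp.sub_apply, hy1]; ring
    have e3 : (y - y') 0 = -((1-s) * (y' 0 - y'' 0)) := by
      simp only [PiLp.sub_apply, hy0]; ring
    have e4 : (y - y') 1 = -((1-s) * (y' 1 - y'' 1)) := by
      simp only [PiLp.sub_apply, hy1]; ring
    rw [e1, e2] at h1
    rw [e3, e4] at h2
    nlinarith [h1, h2, hs1]
  · have h1 := hz y''
    have h2 := hz'' y
    rw [my_inner2] at h1 h2
    have e1 : (y'' - y) 0 = -(s * (y' 0 - y'' 0)) := by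
      simp only [PiLp.sub_apply, hy0]; ring
    have e2 : (y'' - y) 1 = -(s * (y' 1 - y'' 1)) := by
      simp only [PiLp.sub_apply, hy1]; ring
    have e3 : (y - y'') 0 = s * (y' 0 - y'' 0) := by
      simp only [PiLp.sub_apply, hy0]; ring
    have e4 : (y - y'') 1 = s * (y' 1 - y'' 1) := by
      simp only [PiLp.sub_apply, hy1]; ring
    rw [e1, e2] at h1
    rw [e3, e4] at h2
    nlinarith [h1, h2, hs0]

lemma my_arith (ℓ K xp η ξ v0 v1 a0 a1 b0 b1 c0 c1 : ℝ)
    (hℓ : 0 < ℓ) (hK : 0 < K) (hxp : 0 < xp) (hη : 0 < η)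
    (hA1 : (c1 - a1) * v1 ≤ (a0 - c0) * v0)
    (hA2 : (b1 - c1) * v1 ≤ (c0 - b0) * v0)
    (ha0 : |a0| ≤ 10*K*xp/ℓ) (hb0 : |b0| ≤ 10*K*xp/ℓ) (hc0 : |c0| ≤ 10*K*xp/ℓ)
    (ha1 : |a1 - ξ| ≤ η) (hb1 : |b1 - ξ| ≤ η)
    (hslope : |v0| ≤ ℓ*η/(20*K*xp) * |v1|) (hv1 : v1 ≠ 0) :
    |c1 - ξ| ≤ 2*η := by
  have hcmul : (2 * (10*K*xp/ℓ)) * (ℓ*η/(20*K*xp)) = η := by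
    field_simp
    ring
  have key : ∀ c : ℝ, |c| ≤ 2*(10*K*xp/ℓ) → c * v0 ≤ η * |v1| := by
    intro c hc
    calc c * v0 ≤ |c * v0| := le_abs_self _
    _ = |c| * |v0| := abs_mul _ _
    _ ≤ (2*(10*K*xp/ℓ)) * (ℓ*η/(20*K*xp) * |v1|) :=
        mul_le_mul hc hslope (abs_nonneg _) (by positivity)
    _ = ((2*(10*K*xp/ℓ)) * (ℓ*η/(20*K*xp))) * |v1| := by ring
    _ = η * |v1| := by rw [hcmul]
  have habs1 : |a0 - c0| ≤ 2*(10*K*xp/ℓ) := by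
    calc |a0 - c0| ≤ |a0| + |c0| := abs_sub _ _
    _ ≤ 2*(10*K*xp/ℓ) := by linarith
  have habs2 : |c0 - b0| ≤ 2*(10*K*xp/ℓ) := by
    calc |c0 - b0| ≤ |c0| + |b0| := abs_sub _ _
    _ ≤ 2*(10*K*xp/ℓ) := by linarith
  have P1 : (c1 - a1) * v1 ≤ η * |v1| := le_trans hA1 (key _ habs1)
  have P2 : (b1 - c1) * v1 ≤ η * |v1| := le_trans hA2 (key _ habs2)
  have ha1' := abs_le.1 ha1
  have hb1' := abs_le.1 hb1
  rcases lt_or_gt_of_ne hv1 with hneg | hpos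
  · rw [abs_of_neg hneg] at P1 P2
    have q1 : -η ≤ c1 - a1 := by nlinarith [P1]
    have q2 : -η ≤ b1 - c1 := by nlinarith [P2]
    rw [abs_le]
    constructor <;> linarith
  · rw [abs_of_pos hpos] at P1 P2
    have q1 : c1 - a1 ≤ η := by nlinarith [P1]
    have q2 : b1 - c1 ≤ η := by nlinarith [P2]
    rw [abs_le]
    constructor <;> linarith

set_option maxHeartbeats 1000000 in
/-- if the subdifferentials at two points of `Ω_{x⊥}` are `η`-close in
the vertical component to `ξ` and the segment joining them is almost vertical, then the
subdifferential at any point of the open segment is `2η`-close to `ξ` in the vertical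
component. -/
theorem stmt17 : ∃ C : ℝ, 0 < C ∧
    ∀ ℓ δ : ℝ, 0 < ℓ → 0 < δ →
    ∀ ψ : E2 → ℝ, ConvexOn ℝ Set.univ ψ →
    ∀ a b : E2, a 0 = -ℓ → a 1 = 0 → b 0 = ℓ → b 1 = 0 → ψ a = 0 → ψ b = 0 →
    ∀ ε : ℝ, ε = - sInf ((fun t : ℝ => ψ ((1 - t) • a + t • b)) '' Icc 0 1) →
    ∀ K : ℝ, 0 < K →
    (∀ y : E2, |y 0| ≤ ℓ / 2 → y 1 ∈ Icc 0 (2 * δ) → ∀ z ∈ subdiff ψ y, ‖z‖ ≤ K) →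
    ∀ xp : ℝ, 0 < xp → ε / K ≤ xp → xp ≤ δ →
    ∀ ξ η : ℝ, 0 < η →
    ∀ y' y'' : E2,
      |y' 0| ≤ ℓ / 2 → xp / 2 ≤ y' 1 → y' 1 ≤ 2 * xp →
      |y'' 0| ≤ ℓ / 2 → xp / 2 ≤ y'' 1 → y'' 1 ≤ 2 * xp →
      y' ≠ y'' →
      (∃ z' ∈ subdiff ψ y', |z' 1 - ξ| ≤ η) →
      (∃ z'' ∈ subdiff ψ y'', |z'' 1 - ξ| ≤ η) →
      |y' 0 - y'' 0| ≤ ℓ * η / (C * K * xp) * |y' 1 - y'' 1| →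
      ∀ s : ℝ, s ∈ Ioo (0 : ℝ) 1 →
        ∀ z ∈ subdiff ψ (s • y' + (1 - s) • y''), |z 1 - ξ| ≤ 2 * η := by
  refine ⟨20, by norm_num, ?_⟩
  intro ℓ δ hℓ hδ ψ hψ a b ha0 ha1 hb0 hb1 hψa hψb ε hε K hK hKbd xp hxp hεK hxpδ ξ η hη
  intro y' y'' hy'0 hy'1l hy'1u hy''0 hy''1l hy''1u hne hz'ex hz''ex hslope s hs z hz
  obtain ⟨z', hz', hz'ξ⟩ := hz'ex
  obtain ⟨z'', hz'', hz''ξ⟩ := hz''ex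
  have hcont : Continuous ψ := by
    rw [← continuousOn_univ]; exact hψ.continuousOn isOpen_univ
  have hεle : ε ≤ K * xp := by rw [div_le_iff₀ hK] at hεK; linarith
  have hhor : ∀ u : E2, |u 0| ≤ ℓ/2 → 0 ≤ u 1 → u 1 ≤ 2*xp → ∀ w ∈ subdiff ψ u,
      |w 0| ≤ 10*K*xp/ℓ := fun u hu0 hu1 hu2 w hw =>
    my_hhor ℓ δ hℓ hδ ψ hψ a b ha0 ha1 hb0 hb1 hψa hψb ε hε K hK hKbd xp hxp hεle hxpδ
      u hu0 hu1 hu2 w hw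
  -- the interpolation point
  set y : E2 := s • y' + (1 - s) • y'' with hy
  have hs0 := hs.1
  have hs1 := hs.2
  have hy0 : y 0 = s * y' 0 + (1-s) * y'' 0 := by simp [hy]
  have hy1 : y 1 = s * y' 1 + (1-s) * y'' 1 := by simp [hy]
  have hy'0' := abs_le.1 hy'0
  have hy''0' := abs_le.1 hy''0
  have hyin0 : |y 0| ≤ ℓ/2 := by
    rw [hy0, abs_le]
    constructor <;> nlinarith
  have hyin1l : 0 ≤ y 1 := by rw [hy1]; nlinarith
  have hyin1u : y 1 ≤ 2*xp := by rw [hy1]; nlinarith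
  -- horizontal bounds
  have hz0 : |z 0| ≤ 10*K*xp/ℓ := hhor y hyin0 hyin1l hyin1u z hz
  have hz'0 : |z' 0| ≤ 10*K*xp/ℓ := hhor y' hy'0 (by linarith) (by linarith) z' hz'
  have hz''0 : |z'' 0| ≤ 10*K*xp/ℓ := hhor y'' hy''0 (by linarith) (by linarith) z'' hz''
  obtain ⟨A1, A2⟩ := my_mono ψ y' y'' s hs0 hs1 z z' z'' hz hz' hz''
  have hv1 : y' 1 - y'' 1 ≠ 0 := by
    intro h0
    apply hne
    have hv0 : y' 0 - y'' 0 = 0 := by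
      have h3 := hslope
      rw [h0, abs_zero, mul_zero] at h3
      exact abs_eq_zero.1 (le_antisymm h3 (abs_nonneg _))
    ext i
    fin_cases i
    · simpa [sub_eq_zero] using hv0
    · simpa [sub_eq_zero] using h0
  exact my_arith ℓ K xp η ξ (y' 0 - y'' 0) (y' 1 - y'' 1) (z' 0) (z' 1) (z'' 0) (z'' 1)
    (z 0) (z 1) hℓ hK hxp hη A1 A2 hz'0 hz''0 hz0 hz'ξ hz''ξ hslope hv1
end
end
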